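/- Let R be a commutative ring of prime characteristic p, let φ be an e-iterated Frobenius splitting of R for some e ≥ 1, and let J ⊆ R be a φ-compatible ideal. Then: (1) J is a radical ideal; and (2) the quotient R/J is Frobenius split by the induced map, i.e., there exists an e-iterated Frobenius splitting φ̄ of R/J satisfying φ̄(π(x)) = π(φ(x)) for all x ∈ R, where π : R → R/J is the quotient map. -/

import Mathlib

/-- `φ : R → R` is an `e`-iterated Frobenius splitting of `R` (char `p`):
an additive map with `φ (r ^ p ^ e * x) = r * φ x` and `φ 1 = 1`. -/
def IsFrobSplitting {R : Type*} [CommRing R] (p e : ℕ) (φ : R → R) : Prop :=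
  (∀ x y : R, φ (x + y) = φ x + φ y) ∧
  (∀ r x : R, φ (r ^ p ^ e * x) = r * φ x) ∧
  φ 1 = 1

/-- If `J` is an ideal compatible with an `e`-iterated Frobenius splitting `φ` of `R`,
then `J` is radical and `R/J` is Frobenius split by the induced map. -/
theorem compatible_ideal_radical_and_quotient_split {R : Type*} [CommRing R]
    (p : ℕ) [Fact p.Prime] [CharP R p] (e : ℕ) (he : 1 ≤ e)
    (φ : R → R) (hφ : IsFrobSplitting p e φ)
    (J : Ideal R) (hJ : ∀ x ∈ J, φ x ∈ J) :
    J.IsRadical ∧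
      ∃ ψ : R ⧸ J → R ⧸ J, IsFrobSplitting p e ψ ∧
        ∀ x : R, ψ (Ideal.Quotient.mk J x) = Ideal.Quotient.mk J (φ x) := by
  obtain ⟨hadd, hlin, hone⟩ := hφ
  have hp2 : 2 ≤ p := (Fact.out : p.Prime).two_le
  -- φ 0 = 0
  have h0 : φ 0 = 0 := by
    have h := hadd 0 0
    rw [add_zero] at h
    exact (left_eq_add.mp h)
  -- φ (-x) = - φ x
  have hneg : ∀ x : R, φ (-x) = -φ x := by
    intro x
    have h := hadd x (-x)
    rw [add_neg_cancel, h0] at h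
    exact (neg_eq_of_add_eq_zero_right h.symm).symm
  have hsub : ∀ x y : R, φ (x - y) = φ x - φ y := by
    intro x y
    rw [sub_eq_add_neg, hadd, hneg, sub_eq_add_neg]
  -- key: φ (y ^ p ^ e) = y
  have hkey : ∀ y : R, φ (y ^ p ^ e) = y := by
    intro y
    have h := hlin y 1
    rw [mul_one, hone, mul_one] at h
    exact h
  -- iterated descent
  have hiter : ∀ k : ℕ, ∀ x : R, x ^ p ^ (e * k) ∈ J → x ∈ J := by
    intro k
    induction k with
    | zero => intro x hx; simpa using hx
    | succ k ih =>
      intro x hx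
      apply ih
      have : x ^ p ^ (e * (k + 1)) = (x ^ p ^ (e * k)) ^ p ^ e := by
        rw [← pow_mul, ← pow_add, mul_add, mul_one]
      rw [this] at hx
      have := hJ _ hx
      rwa [hkey] at this
  constructor
  · -- radical
    intro x hx
    obtain ⟨n, hn⟩ := hx
    apply hiter n
    have hle : n ≤ p ^ (e * n) := by
      calc n ≤ 2 ^ n := Nat.le_of_lt (Nat.lt_two_pow_self (n := n))
        _ ≤ p ^ n := Nat.pow_le_pow_left hp2 n
        _ ≤ p ^ (e * n) := Nat.pow_le_pow_right (le_trans (by norm_num) hp2)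
            (by nlinarith)
    have : x ^ p ^ (e * n) = x ^ (p ^ (e * n) - n) * x ^ n := by
      rw [← pow_add, Nat.sub_add_cancel hle]
    rw [this]
    exact Ideal.mul_mem_left _ _ hn
  · -- quotient splitting
    set mk := Ideal.Quotient.mk J with hmk
    have hsurj : Function.Surjective mk := Ideal.Quotient.mk_surjective
    have hcongr : ∀ x y : R, mk x = mk y → mk (φ x) = mk (φ y) := by
      intro x y h
      have hxy : x - y ∈ J := Ideal.Quotient.eq.mp h
      have : φ x - φ y ∈ J := by rw [← hsub]; exact hJ _ hxy
      exact Ideal.Quotient.eq.mpr this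
    refine ⟨fun a => mk (φ (Function.surjInv hsurj a)), ?_, ?_⟩
    · have hψmk : ∀ x : R, mk (φ (Function.surjInv hsurj (mk x))) = mk (φ x) :=
        fun x => hcongr _ _ (Function.surjInv_eq hsurj (mk x))
      refine ⟨?_, ?_, ?_⟩
      · intro a b
        obtain ⟨x, rfl⟩ := hsurj a
        obtain ⟨y, rfl⟩ := hsurj b
        beta_reduce
        rw [← map_add, hψmk, hψmk, hψmk, hadd, map_add]
      · intro r a
        obtain ⟨s, rfl⟩ := hsurj r
        obtain ⟨y, rfl⟩ := hsurj a
        beta_reduce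
        rw [← map_pow, ← map_mul, hψmk, hψmk, hlin, map_mul]
      · beta_reduce
        rw [show (1 : R ⧸ J) = mk 1 from (map_one mk).symm, hψmk, hone]
    · intro x
      exact hcongr _ _ (Function.surjInv_eq hsurj (mk x))
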